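/- Let k > 0, let w_k be the unique real number w with -1 ≤ w < 0 satisfying w·exp(w) = -(k+1)·exp(-(k+1)), and define f(v) = (1 - v/(k+1))·w_k - ln(v - k) for v > k. Then f is strictly convex on (k, ∞), f(k+1) = 0, the unique minimizer of f is v_m = k - (k+1)/w_k and satisfies k + 1 < v_m, and f has exactly two roots in (k, ∞), the smaller of which is k + 1. -/

import Mathlib

open Real Set

-- strict convexity of f on Ioi k
lemma aux_conv (k w : ℝ) (hk : 0 < k) (hw2 : w < 0) :
    StrictConvexOn ℝ (Set.Ioi k)
      (fun v : ℝ => (1 - v / (k + 1)) * w - Real.log (v - k)) := by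
  constructor
  · exact convex_Ioi k
  · intro x hx y hy hxy a b ha hb hab
    simp only [mem_Ioi] at hx hy
    have hx' : x - k ∈ Set.Ioi (0:ℝ) := by simp [mem_Ioi]; linarith
    have hy' : y - k ∈ Set.Ioi (0:ℝ) := by simp [mem_Ioi]; linarith
    have hne : x - k ≠ y - k := by intro h; apply hxy; linarith
    have hlog := strictConcaveOn_log_Ioi.2 hx' hy' hne ha hb hab
    simp only [smul_eq_mul] at hlog ⊢
    have hsum : a * x + b * y - k = a * (x - k) + b * (y - k) := by
      linear_combination k * hab
    rw [hsum]
    have hlin : (1 - (a * x + b * y) / (k + 1)) * w =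
        a * ((1 - x / (k + 1)) * w) + b * ((1 - y / (k + 1)) * w) := by
      have hk1 : (k:ℝ) + 1 ≠ 0 := by positivity
      field_simp
      linear_combination (-(k*w) - w) * hab
    rw [hlin]
    linarith

-- three roots impossible
lemma aux_three {s : Set ℝ} {f : ℝ → ℝ} (h : StrictConvexOn ℝ s f) {x y z : ℝ}
    (hx : x ∈ s) (hz : z ∈ s) (hxy : x < y) (hyz : y < z)
    (fx : f x = 0) (fy : f y = 0) (fz : f z = 0) : False := by
  have hxz : x < z := hxy.trans hyz
  have hd : (0:ℝ) < z - x := by linarith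
  set a := (z - y) / (z - x) with hadef
  set b := (y - x) / (z - x) with hbdef
  have ha : 0 < a := by apply div_pos <;> linarith
  have hb : 0 < b := by apply div_pos <;> linarith
  have hab : a + b = 1 := by rw [hadef, hbdef]; field_simp; ring
  have key := h.2 hx hz (ne_of_lt hxz) ha hb hab
  have hy' : a • x + b • z = y := by
    simp only [smul_eq_mul, hadef, hbdef]; field_simp; ring
  rw [hy', fx, fy, fz] at key
  simp at key

set_option maxHeartbeats 1000000 in
/-- With `w = w_k` and `f(v) = (1 - v/(k+1))·w - ln(v - k)` for `v > k`:
`f` is strictly convex on `(k, ∞)`, `f(k+1) = 0`, the unique minimizer is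
`v_m = k - (k+1)/w` and satisfies `k + 1 < v_m`, and `f` has exactly two roots
in `(k, ∞)`, the smaller of which is `k + 1`. -/
theorem stmt12 (k w : ℝ) (hk : 0 < k) (hw1 : -1 ≤ w) (hw2 : w < 0)
    (hwe : w * Real.exp w = -(k + 1) * Real.exp (-(k + 1))) :
    StrictConvexOn ℝ (Set.Ioi k)
      (fun v : ℝ => (1 - v / (k + 1)) * w - Real.log (v - k)) ∧
    (1 - (k + 1) / (k + 1)) * w - Real.log ((k + 1) - k) = 0 ∧
    k + 1 < k - (k + 1) / w ∧
    (∀ v ∈ Set.Ioi k, v ≠ k - (k + 1) / w →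
      (1 - (k - (k + 1) / w) / (k + 1)) * w - Real.log ((k - (k + 1) / w) - k) <
        (1 - v / (k + 1)) * w - Real.log (v - k)) ∧
    (∃ v2 : ℝ, k + 1 < v2 ∧
      (1 - v2 / (k + 1)) * w - Real.log (v2 - k) = 0 ∧
      ∀ v ∈ Set.Ioi k, (1 - v / (k + 1)) * w - Real.log (v - k) = 0 →
        v = k + 1 ∨ v = v2) := by
  have hk1 : (0:ℝ) < k + 1 := by linarith
  have hwne : w ≠ 0 := ne_of_lt hw2
  have hnw : 0 < -w := by linarith
  have hconv := aux_conv k w hk hw2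
  -- value at k+1
  have hval : (1 - (k + 1) / (k + 1)) * w - Real.log ((k + 1) - k) = 0 := by
    rw [div_self hk1.ne']
    norm_num
  -- v_m
  set vm := k - (k + 1) / w with hvm
  clear_value vm
  have hvmk : vm - k = (k + 1) / (-w) := by rw [hvm]; field_simp; ring
  have hvmk1 : 1 < vm - k := by
    rw [hvmk, lt_div_iff₀ hnw]; linarith
  have hvmgt : k + 1 < vm := by linarith
  -- f(vm) formula
  have hlogvm : Real.log (vm - k) = Real.log (k + 1) - Real.log (-w) := by
    rw [hvmk, Real.log_div hk1.ne' hnw.ne']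
  have hfvm : (1 - vm / (k + 1)) * w - Real.log (vm - k)
      = 1 + w / (k + 1) - Real.log (k + 1) + Real.log (-w) := by
    rw [hlogvm, hvm]; field_simp; ring
  -- log a < a - 1 with a = -w/(k+1)
  have ha_pos : 0 < -w / (k + 1) := div_pos hnw hk1
  have ha_lt : -w / (k + 1) < 1 := by
    rw [div_lt_one hk1]; linarith
  have hloga : Real.log (-w / (k + 1)) < -w / (k + 1) - 1 :=
    Real.log_lt_sub_one_of_pos ha_pos (ne_of_lt ha_lt)
  have hloga' : Real.log (-w / (k + 1)) = Real.log (-w) - Real.log (k + 1) :=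
    Real.log_div hnw.ne' hk1.ne'
  have hdivneg : -w / (k + 1) = -(w / (k + 1)) := by ring
  have hfvmneg : (1 - vm / (k + 1)) * w - Real.log (vm - k) < 0 := by
    rw [hfvm]
    rw [hloga', hdivneg] at hloga
    linarith
  -- minimizer property
  have hmin : ∀ v ∈ Set.Ioi k, v ≠ vm →
      (1 - vm / (k + 1)) * w - Real.log (vm - k) <
        (1 - v / (k + 1)) * w - Real.log (v - k) := by
    intro v hv hne
    simp only [Set.mem_Ioi] at hv
    have htv : 0 < v - k := by linarith
    set x := -w * (v - k) / (k + 1) with hx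
    clear_value x
    have hxpos : 0 < x := by rw [hx]; positivity
    have hxne : x ≠ 1 := by
      intro h
      apply hne
      rw [hx, div_eq_one_iff_eq hk1.ne'] at h
      rw [hvm]
      field_simp
      nlinarith [h]
    have hkey := Real.log_lt_sub_one_of_pos hxpos hxne
    have hlogx : Real.log x = Real.log (-w) + Real.log (v - k) - Real.log (k + 1) := by
      rw [hx, Real.log_div (by positivity) hk1.ne', Real.log_mul hnw.ne' htv.ne']
    rw [hfvm]
    rw [hlogx] at hkey
    have halg : (1 - v / (k + 1)) * w = x + w / (k + 1) := by
      rw [hx]; field_simp; ring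
    rw [halg]
    linarith
  refine ⟨hconv, hval, hvmgt, hmin, ?_⟩
  -- existence of second root
  set a := -w / (k + 1) with hadef
  clear_value a
  have ha0 : 0 < a := ha_pos
  have hia : (0:ℝ) < 1 / a := by positivity
  set s := 2 / a + 1 with hsdef
  clear_value s
  have hs1 : (1:ℝ) < s := by
    have h2a : (0:ℝ) < 2 / a := by positivity
    rw [hsdef]; linarith
  have hsia : 1 / a < s := by
    rw [hsdef]
    have h2a : 2 / a = 1 / a + 1 / a := by ring
    linarith
  set V := k + s ^ 2 with hV
  clear_value V
  have hVk : V - k = s ^ 2 := by rw [hV]; ring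
  have hVpos : 0 < V - k := by rw [hVk]; positivity
  have hlogs : Real.log s ≤ s - 1 := Real.log_le_sub_one_of_pos (by linarith)
  have hfV : 0 < (1 - V / (k + 1)) * w - Real.log (V - k) := by
    have h1 : (1 - V / (k + 1)) * w = a * (s ^ 2 - 1) := by
      rw [hV, hsdef, hadef]; field_simp; ring
    have h2 : Real.log (V - k) = 2 * Real.log s := by
      rw [hVk, sq, Real.log_mul (by linarith) (by linarith), two_mul]
    have h3 : a * (s ^ 2 - 1) - 2 * (s - 1) = 4 := by
      rw [hsdef]; field_simp; ring
    rw [h1, h2]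
    linarith
  have hvmV : vm < V := by
    have h1 : vm - k = 1 / a := by rw [hvmk, hadef]; rw [one_div_div]
    have h2 : s < s ^ 2 := by nlinarith
    linarith [hsia]
  have hcont : ContinuousOn (fun v : ℝ => (1 - v / (k + 1)) * w - Real.log (v - k))
      (Set.Icc vm V) := by
    apply ContinuousOn.sub
    · exact ((continuous_const.sub (continuous_id.div_const _)).mul continuous_const).continuousOn
    · apply ContinuousOn.log
      · exact (continuous_id.sub continuous_const).continuousOn
      · intro v hv
        have h1 := hv.1
        have : k < v := by linarith
        exact sub_ne_zero.mpr this.ne'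
  have hivt := intermediate_value_Ioo (le_of_lt hvmV) hcont
  have h0mem : (0:ℝ) ∈ Set.Ioo ((1 - vm / (k + 1)) * w - Real.log (vm - k))
      ((1 - V / (k + 1)) * w - Real.log (V - k)) := ⟨hfvmneg, hfV⟩
  obtain ⟨v2, hv2mem, hv2root⟩ := hivt h0mem
  have hv2gt : k + 1 < v2 := lt_trans hvmgt hv2mem.1
  refine ⟨v2, hv2gt, hv2root, ?_⟩
  intro v hv hroot
  by_contra hcon
  push_neg at hcon
  obtain ⟨h1, h2⟩ := hcon
  have hk1mem : (k + 1 : ℝ) ∈ Set.Ioi k := by simp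
  have hv2mem' : v2 ∈ Set.Ioi k := by simp; linarith
  rcases lt_trichotomy v (k + 1) with hlt | heq | hgt
  · exact aux_three hconv hv hv2mem' hlt (by linarith) hroot hval hv2root
  · exact h1 heq
  · rcases lt_trichotomy v v2 with hlt2 | heq2 | hgt2
    · exact aux_three hconv hk1mem hv2mem' hgt hlt2 hval hroot hv2root
    · exact h2 heq2
    · exact aux_three hconv hk1mem hv hv2gt hgt2 hval hv2root hroot
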